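/- arXiv:2102.08143 — 3 statements merged into one kernel-verified Lean document; each statement's English description precedes it below -/
import Mathlib

section
/- Let d ≥ 1, let f : ℝ^d × ℝ → ℝ^d be continuously differentiable, let ρ : ℝ^d × ℝ → ℝ be continuously differentiable and satisfy ∂ρ/∂t(x,t) = −∑_{k=1}^d ∂/∂x_k [f_k(x,t) ρ(x,t)] for all (x,t), and let x : ℝ → ℝ^d be differentiable with x'(t) = f(x(t), t). Then for every t ≥ 0, ρ(x(t), t) = ρ(x(0), 0) · exp( −∫_0^t ∑_{k=1}^d ∂f_k/∂x_k (x(s), s) ds ). -/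
open Real Finset

/-- the value of the PDF solving the convection equation along a
characteristic trajectory is obtained from the value at the preimage `x 0` by
multiplying with `exp(-∫_0^t trace(∂f/∂x)(x(s),s) ds)`. -/
theorem fpe_convection_pdf_formula
    (d : ℕ) (hd : 1 ≤ d)
    (f : (Fin d → ℝ) × ℝ → Fin d → ℝ) (hf : ContDiff ℝ 1 f)
    (ρ : (Fin d → ℝ) × ℝ → ℝ) (hρ : ContDiff ℝ 1 ρ)
    (hconv : ∀ (x : Fin d → ℝ) (t : ℝ),
      deriv (fun s => ρ (x, s)) t
        = - ∑ k, deriv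
            (fun y => f (Function.update x k y, t) k * ρ (Function.update x k y, t)) (x k))
    (x : ℝ → Fin d → ℝ) (hx : ∀ t, HasDerivAt x (f (x t, t)) t) :
    ∀ t : ℝ, 0 ≤ t →
      ρ (x t, t) = ρ (x 0, 0) *
        Real.exp (-(∫ s in (0 : ℝ)..t,
          ∑ k, deriv (fun y => f (Function.update (x s) k y, s) k) (x s k))) := by
  have hρd : Differentiable ℝ ρ := hρ.differentiable one_ne_zero
  have hfd : Differentiable ℝ f := hf.differentiable one_ne_zero
  have hfk : ∀ k, Differentiable ℝ (fun p => f p k) := fun k => differentiable_pi.mp hfd k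
  -- spatial partial derivative of a differentiable function, as a derivative of a 1-variable map
  have hup : ∀ (x0 : Fin d → ℝ) (t : ℝ) (k : Fin d) (u : (Fin d → ℝ) × ℝ → ℝ),
      DifferentiableAt ℝ u (x0, t) →
      HasDerivAt (fun y => u (Function.update x0 k y, t))
        (fderiv ℝ u (x0, t) ((Pi.single k 1 : Fin d → ℝ), (0 : ℝ))) (x0 k) := by
    intro x0 t k u hu
    have h1 : HasDerivAt (fun y => ((Function.update x0 k y : Fin d → ℝ), t))
        (((Pi.single k 1 : Fin d → ℝ), (0 : ℝ))) (x0 k) :=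
      (hasDerivAt_update x0 k (x0 k)).prodMk (hasDerivAt_const _ _)
    have hu' : HasFDerivAt u (fderiv ℝ u (x0, t))
        ((Function.update x0 k (x0 k) : Fin d → ℝ), t) := by
      simpa [Function.update_eq_self] using hu.hasFDerivAt
    exact hu'.comp_hasDerivAt (x0 k) h1
  -- time derivative
  have hts : ∀ (x0 : Fin d → ℝ) (t : ℝ) (u : (Fin d → ℝ) × ℝ → ℝ),
      DifferentiableAt ℝ u (x0, t) →
      HasDerivAt (fun s => u (x0, s)) (fderiv ℝ u (x0, t) ((0 : Fin d → ℝ), (1 : ℝ))) t := by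
    intro x0 t u hu
    have h1 : HasDerivAt (fun s : ℝ => ((x0 : Fin d → ℝ), s)) (((0 : Fin d → ℝ), (1 : ℝ))) t :=
      (hasDerivAt_const _ _).prodMk (hasDerivAt_id _)
    exact hu.hasFDerivAt.comp_hasDerivAt t h1
  -- linear decomposition of the full derivative
  have hdecomp : ∀ (L : ((Fin d → ℝ) × ℝ) →L[ℝ] ℝ) (v : Fin d → ℝ),
      L (v, 1) = (∑ k, v k * L ((Pi.single k 1 : Fin d → ℝ), (0 : ℝ)))
        + L ((0 : Fin d → ℝ), (1 : ℝ)) := by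
    intro L v
    have hv : ((v, (1 : ℝ)) : (Fin d → ℝ) × ℝ)
        = (∑ k, v k • (((Pi.single k 1 : Fin d → ℝ), (0 : ℝ)) : (Fin d → ℝ) × ℝ))
          + (((0 : Fin d → ℝ), (1 : ℝ)) : (Fin d → ℝ) × ℝ) := by
      refine Prod.ext ?_ ?_
      · simp only [Prod.fst_add, Prod.fst_sum, Prod.smul_fst, Prod.snd_add]
        funext i
        simp [Finset.sum_apply, Pi.single_apply]
      · simp [Prod.snd_sum]
    rw [hv, map_add, map_sum]
    refine congrArg₂ (· + ·) (Finset.sum_congr rfl fun k _ => ?_) rfl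
    rw [map_smul, smul_eq_mul]
  -- divergence along the trajectory
  set F : ℝ → ℝ := fun s =>
    ∑ k, deriv (fun y => f (Function.update (x s) k y, s) k) (x s k) with hFdef
  have hFeq : ∀ s, F s = ∑ k,
      fderiv ℝ (fun p => f p k) (x s, s) ((Pi.single k 1 : Fin d → ℝ), (0 : ℝ)) := by
    intro s
    refine Finset.sum_congr rfl fun k _ => ?_
    exact (hup (x s) s k (fun p => f p k) ((hfk k) _)).deriv
  -- continuity of x and F
  have hxc : Continuous x := continuous_iff_continuousAt.mpr fun t => (hx t).continuousAt
  have hFc : Continuous F := by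
    rw [funext hFeq]
    refine continuous_finset_sum _ fun k _ => ?_
    have hC := (contDiff_pi.mp hf k).continuous_fderiv_apply one_ne_zero
    exact hC.comp ((hxc.prodMk continuous_id).prodMk continuous_const)
  -- the pointwise ODE along the trajectory
  have hg : ∀ t, HasDerivAt (fun t => ρ (x t, t)) (-(F t) * ρ (x t, t)) t := by
    intro t
    have hxt : HasDerivAt (fun s => ((x s : Fin d → ℝ), s)) ((f (x t, t), (1 : ℝ))) t :=
      (hx t).prodMk (hasDerivAt_id t)
    have hA : HasDerivAt (fun s => ρ (x s, s)) (fderiv ℝ ρ (x t, t) (f (x t, t), 1)) t := by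
      refine HasFDerivAt.comp_hasDerivAt t ?_ hxt
      exact (hρd (x t, t)).hasFDerivAt
    convert hA using 1
    rw [hdecomp]
    have hT : fderiv ℝ ρ (x t, t) ((0 : Fin d → ℝ), (1 : ℝ))
        = - ∑ k, deriv
            (fun y => f (Function.update (x t) k y, t) k * ρ (Function.update (x t) k y, t))
            (x t k) := by
      rw [← hconv (x t) t]
      exact ((hts (x t) t ρ (hρd _)).deriv).symm
    have hprod : ∀ k : Fin d,
        deriv (fun y => f (Function.update (x t) k y, t) k * ρ (Function.update (x t) k y, t))
          (x t k)
        = fderiv ℝ (fun p => f p k) (x t, t) ((Pi.single k 1 : Fin d → ℝ), (0 : ℝ)) * ρ (x t, t)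
          + f (x t, t) k * fderiv ℝ ρ (x t, t) ((Pi.single k 1 : Fin d → ℝ), (0 : ℝ)) := by
      intro k
      have := ((hup (x t) t k (fun p => f p k) ((hfk k) _)).fun_mul (hup (x t) t k ρ (hρd _))).deriv
      simpa [Function.update_eq_self] using this
    rw [hT, hFeq t, Finset.sum_congr rfl fun k _ => hprod k, Finset.sum_add_distrib,
      ← Finset.sum_mul]
    ring
  -- integrate the ODE
  set I : ℝ → ℝ := fun t => ∫ s in (0 : ℝ)..t, F s with hIdef
  have hI : ∀ t, HasDerivAt I (F t) t := fun t => (hFc.integral_hasStrictDerivAt 0 t).hasDerivAt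
  have hH : ∀ t, HasDerivAt (fun t => ρ (x t, t) * Real.exp (I t)) 0 t := by
    intro t
    have hE : HasDerivAt (fun t => Real.exp (I t)) (Real.exp (I t) * F t) t := (hI t).exp
    have h : HasDerivAt (fun t => ρ (x t, t) * Real.exp (I t)) _ t := (hg t).fun_mul hE
    convert h using 1
    ring
  have hconst : ∀ t, ρ (x t, t) * Real.exp (I t) = ρ (x 0, 0) := by
    intro t
    have h0 : (fun t => ρ (x t, t) * Real.exp (I t)) t
        = (fun t => ρ (x t, t) * Real.exp (I t)) 0 :=
      is_const_of_deriv_eq_zero (fun s => (hH s).differentiableAt) (fun s => (hH s).deriv) t 0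
    simpa [hIdef, intervalIntegral.integral_same] using h0
  intro t _
  have h := hconst t
  rw [← h, mul_assoc, ← Real.exp_add, add_neg_cancel, Real.exp_zero, mul_one]
end

section
/- Let d ≥ 1, let A be a d×d real matrix, let D_c > 0, and let W be a symmetric positive-definite d×d real matrix satisfying the Lyapunov equation A·W + W·Aᵀ = 2 D_c I_d. Define ρ_st : ℝ^d → ℝ by ρ_st(x) = ((2π)^d det W)^{−1/2} exp(−(1/2) xᵀ W^{−1} x). Then ρ_st is a stationary solution of the Ornstein–Uhlenbeck Fokker–Planck equation with zero long-term mean: for all x ∈ ℝ^d, D_c·∑_{i=1}^d ∂²ρ_st/∂x_i²(x) + ∑_{i=1}^d ∂/∂x_i [(A x)_i · ρ_st(x)] = 0. -/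
open Real Matrix Finset

private lemma gauss_hasDerivAt (c Cq a b xi : ℝ) (f : ℝ → ℝ)
    (hf : ∀ y, f y = c * Real.exp (-(1/2) * (Cq + 2*(y - xi)*b + (y - xi)^2 * a))) :
    ∀ y, HasDerivAt f (-(b + (y - xi)*a) * f y) y := by
  intro y
  have hpoly : HasDerivAt (fun y : ℝ => -(1/2) * (Cq + 2*(y - xi)*b + (y - xi)^2 * a))
      (-(b + (y - xi)*a)) y := by
    have hid : HasDerivAt (fun y : ℝ => y - xi) 1 y := (hasDerivAt_id y).sub_const xi
    have h1 := ((hasDerivAt_const y Cq).add (((hid.const_mul 2)).mul_const b)).add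
        ((hid.pow 2).mul_const a)
    have := h1.const_mul (-(1/2))
    refine this.congr_deriv ?_
    push_cast
    ring
  have h2 := hpoly.exp.const_mul c
  have hfun : f = fun y => c * Real.exp (-(1/2) * (Cq + 2*(y - xi)*b + (y - xi)^2 * a)) :=
    funext hf
  rw [hfun]
  refine h2.congr_deriv ?_
  beta_reduce
  ring

/-- if the symmetric positive-definite matrix `W` solves the
Lyapunov equation `A W + W Aᵀ = 2 D_c I`, then the Gaussian density
`ρ_st(x) = ((2π)^d det W)^{-1/2} exp(-½ xᵀ W⁻¹ x)` is a stationary solution of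
the Ornstein–Uhlenbeck Fokker–Planck equation
`D_c Σᵢ ∂²ρ/∂xᵢ² + Σᵢ ∂/∂xᵢ ((Ax)ᵢ ρ) = 0`. -/
theorem ou_stationary_solution_multidim
    (d : ℕ) (hd : 1 ≤ d)
    (A W : Matrix (Fin d) (Fin d) ℝ) (Dc : ℝ) (hDc : 0 < Dc)
    (hWsymm : W.IsSymm) (hWpos : W.PosDef)
    (hLyap : A * W + W * Aᵀ = (2 * Dc) • (1 : Matrix (Fin d) (Fin d) ℝ))
    (ρ : (Fin d → ℝ) → ℝ)
    (hρ : ∀ x : Fin d → ℝ,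
      ρ x = (Real.sqrt ((2 * π) ^ d * W.det))⁻¹
        * Real.exp (-(1 / 2) * (x ⬝ᵥ W⁻¹.mulVec x))) :
    ∀ x : Fin d → ℝ,
      Dc * ∑ i, deriv (deriv (fun y => ρ (Function.update x i y))) (x i)
        + ∑ i, deriv (fun y =>
            A.mulVec (Function.update x i y) i * ρ (Function.update x i y)) (x i) = 0 := by
  intro x
  set S := W⁻¹ with hSdef
  set c := (Real.sqrt ((2 * π) ^ d * W.det))⁻¹ with hcdef
  -- matrix facts
  have hWdet : IsUnit W.det := isUnit_iff_ne_zero.mpr (ne_of_gt hWpos.det_pos)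
  have hWS : W * S = 1 := Matrix.mul_nonsing_inv W hWdet
  have hSW : S * W = 1 := Matrix.nonsing_inv_mul W hWdet
  have hS : Sᵀ = S := by
    rw [hSdef, Matrix.transpose_nonsing_inv, hWsymm.eq]
  have hkey : S * A + Aᵀ * S = (2 * Dc) • (S * S) := by
    have h := congrArg (fun M => S * M * S) hLyap
    simp only [mul_add, add_mul] at h
    calc S * A + Aᵀ * S
        = S * (A * W) * S + S * (W * Aᵀ) * S := by
          rw [← mul_assoc S A W, mul_assoc (S*A) W S, hWS, mul_one,
            ← mul_assoc S W Aᵀ, hSW, one_mul]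
      _ = S * ((2*Dc) • (1 : Matrix (Fin d) (Fin d) ℝ)) * S := h
      _ = (2 * Dc) • (S * S) := by
          rw [Matrix.mul_smul, Matrix.smul_mul, mul_one]
  have htr : A.trace = Dc * S.trace := by
    have h := congrArg (fun M => (M * S).trace) hLyap
    simp only [add_mul, Matrix.trace_add] at h
    rw [mul_assoc A W S, hWS, mul_one] at h
    rw [mul_assoc W Aᵀ S, Matrix.trace_mul_comm W (Aᵀ * S), mul_assoc, hSW, mul_one,
      Matrix.trace_transpose] at h
    rw [Matrix.smul_mul, one_mul, Matrix.trace_smul] at h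
    have h2 : (2:ℝ) * A.trace = 2 * Dc * S.trace := by
      rw [two_mul]; simpa using h
    linarith
  have hvm : Matrix.vecMul x S = S.mulVec x := by
    conv_lhs => rw [← hS]
    exact Matrix.vecMul_transpose S x
  have hsym : ∀ w, x ⬝ᵥ S.mulVec w = S.mulVec x ⬝ᵥ w := fun w => by
    rw [Matrix.dotProduct_mulVec, hvm]
  have hAt : ∀ w, x ⬝ᵥ Aᵀ.mulVec w = A.mulVec x ⬝ᵥ w := fun w => by
    rw [Matrix.dotProduct_mulVec, Matrix.vecMul_transpose]
  have hq : A.mulVec x ⬝ᵥ S.mulVec x = Dc * (S.mulVec x ⬝ᵥ S.mulVec x) := by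
    have h := congrArg (fun M => x ⬝ᵥ M.mulVec x) hkey
    simp only [Matrix.add_mulVec, dotProduct_add, ← Matrix.mulVec_mulVec,
      Matrix.smul_mulVec, dotProduct_smul, smul_eq_mul, hsym, hAt] at h
    rw [dotProduct_comm (S.mulVec x) (A.mulVec x)] at h
    linarith
  -- componentwise facts
  have hS2 : ∀ j k, S j k = S k j := fun j k => by
    conv_lhs => rw [← hS, Matrix.transpose_apply]
  have hupdate : ∀ (i : Fin d) (y : ℝ),
      Function.update x i y = x + (y - x i) • (Pi.single i (1:ℝ) : Fin d → ℝ) := by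
    intro i y
    funext j
    rcases eq_or_ne j i with h | h
    · subst h; simp
    · simp [Function.update_of_ne h, Pi.single_apply, h]
  have hds : ∀ i : Fin d, x ⬝ᵥ S.mulVec (Pi.single i (1:ℝ)) = S.mulVec x i := by
    intro i
    rw [Matrix.mulVec_single]
    simp only [dotProduct, Matrix.mulVec, mul_one]
    exact Finset.sum_congr rfl fun j _ => by simp [hS2 j i, mul_comm]
  have hquad : ∀ (i : Fin d) (y : ℝ),
      (Function.update x i y) ⬝ᵥ S.mulVec (Function.update x i y)
        = x ⬝ᵥ S.mulVec x + 2*(y - x i)*(S.mulVec x i) + (y - x i)^2 * S i i := by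
    intro i y
    have hsd : ∀ v : Fin d → ℝ, (Pi.single i (1:ℝ) : Fin d → ℝ) ⬝ᵥ v = v i := by
      intro v; simp
    rw [hupdate i y]
    rw [Matrix.mulVec_add, Matrix.mulVec_smul, dotProduct_add, add_dotProduct, add_dotProduct,
      dotProduct_smul, dotProduct_smul, smul_dotProduct, smul_dotProduct, hsd, hds]
    have h3 : S.mulVec (Pi.single i (1:ℝ)) i = S i i := by simp [Matrix.mulVec_single]
    simp only [smul_eq_mul, hsd]
    rw [h3]
    ring
  -- derivative of the density along coordinate i
  have key : ∀ (i : Fin d) (y : ℝ),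
      HasDerivAt (fun y => ρ (Function.update x i y))
        (-(S.mulVec x i + (y - x i) * S i i) * ρ (Function.update x i y)) y := by
    intro i
    exact gauss_hasDerivAt c (x ⬝ᵥ S.mulVec x) (S i i) (S.mulVec x i) (x i)
      (fun y => ρ (Function.update x i y))
      (fun y => by show ρ (Function.update x i y) = _; rw [hρ, hquad])
  have hupx : ∀ i : Fin d, Function.update x i (x i) = x := fun i => Function.update_eq_self i x
  -- second derivative
  have hsecond : ∀ i : Fin d,
      deriv (deriv (fun y => ρ (Function.update x i y))) (x i)
        = ((S.mulVec x i)^2 - S i i) * ρ x := by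
    intro i
    have hd1 : deriv (fun y => ρ (Function.update x i y))
        = fun y => -(S.mulVec x i + (y - x i) * S i i) * ρ (Function.update x i y) :=
      funext fun y => (key i y).deriv
    rw [hd1]
    have hl : HasDerivAt (fun y : ℝ => -(S.mulVec x i + (y - x i) * S i i)) (-(S i i)) (x i) := by
      have hid : HasDerivAt (fun y : ℝ => y - x i) 1 (x i) := (hasDerivAt_id _).sub_const _
      have := ((hasDerivAt_const (x i) (S.mulVec x i)).add (hid.mul_const (S i i))).neg
      refine this.congr_deriv ?_
      ring
    have hφ := key i (x i)
    have hmul := hl.mul hφ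
    simp only [Pi.mul_def] at hmul
    have := hmul.deriv
    rw [this, hupx i]
    simp only [sub_self, zero_mul, add_zero]
    ring
  -- drift term derivative
  have hAup : ∀ (i : Fin d) (y : ℝ),
      A.mulVec (Function.update x i y) i = A.mulVec x i + (y - x i) * A i i := by
    intro i y
    rw [hupdate i y, Matrix.mulVec_add, Matrix.mulVec_smul]
    simp [Matrix.mulVec_single, mul_comm]
  have hdrift : ∀ i : Fin d,
      deriv (fun y => A.mulVec (Function.update x i y) i * ρ (Function.update x i y)) (x i)
        = (A i i - A.mulVec x i * S.mulVec x i) * ρ x := by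
    intro i
    have hA : HasDerivAt (fun y : ℝ => A.mulVec x i + (y - x i) * A i i) (A i i) (x i) := by
      have hid : HasDerivAt (fun y : ℝ => y - x i) 1 (x i) := (hasDerivAt_id _).sub_const _
      have := (hasDerivAt_const (x i) (A.mulVec x i)).add (hid.mul_const (A i i))
      refine this.congr_deriv ?_
      ring
    have hφ := key i (x i)
    have hmul := hA.mul hφ
    simp only [Pi.mul_def] at hmul
    have hfun : (fun y => A.mulVec (Function.update x i y) i * ρ (Function.update x i y))
        = fun y => (A.mulVec x i + (y - x i) * A i i) * ρ (Function.update x i y) :=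
      funext fun y => by rw [hAup i y]
    rw [hfun, hmul.deriv, hupx i]
    simp only [sub_self, zero_mul, add_zero]
    ring
  -- put everything together
  simp only [hsecond, hdrift]
  have e1 : ∑ i, ((S.mulVec x i)^2 - S i i) * ρ x
      = (S.mulVec x ⬝ᵥ S.mulVec x - S.trace) * ρ x := by
    rw [← Finset.sum_mul]
    congr 1
    simp [dotProduct, sq, Matrix.trace, Matrix.diag, Finset.sum_sub_distrib]
  have e2 : ∑ i, (A i i - A.mulVec x i * S.mulVec x i) * ρ x
      = (A.trace - A.mulVec x ⬝ᵥ S.mulVec x) * ρ x := by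
    rw [← Finset.sum_mul]
    congr 1
    simp [dotProduct, Matrix.trace, Matrix.diag, Finset.sum_sub_distrib]
  rw [e1, e2, htr, hq]
  ring
end

section
/- Let N ≥ 2, set M = N − 1 and let x_j = cos(πj/M), j = 0, …, M, be the Chebyshev nodes. Define constants c_j = 2 for j ∈ {0, M} and c_j = 1 otherwise, and define the N×N Chebyshev differentiation matrix D̃ by: D̃[0,0] = (2M² + 1)/6, D̃[M,M] = −(2M² + 1)/6, D̃[j,j] = −x_j/(2(1 − x_j²)) for 0 < j < M, and D̃[i,j] = (c_i/c_j)·(−1)^{i+j}/(x_i − x_j) for i ≠ j. Then D̃ differentiates polynomials exactly on the grid: for every real polynomial p of degree at most N − 1 and every i, ∑_{j=0}^{M} D̃[i,j] · p(x_j) = p'(x_i). -/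
open Real Finset Polynomial

namespace ChebyshevDiffAux
open Polynomial.Chebyshev

lemma chebU_basic (n : ℕ) :
    (U ℝ (n : ℤ)).eval 1 = n + 1 ∧ (U ℝ (n : ℤ)).eval (-1) = (-1) ^ n * (n + 1)
      ∧ (U ℝ (n : ℤ)).natDegree ≤ n ∧ (U ℝ (n : ℤ)).coeff n = 2 ^ n := by
  induction n using Nat.twoStepInduction with
  | zero => simp [U_zero]
  | one =>
    have hU : (U ℝ ((1:ℕ) : ℤ)) = C 2 * X := by
      norm_num [U_one]
      rw [(map_ofNat Polynomial.C 2 : C (2:ℝ) = 2)]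
    refine ⟨by rw [hU]; norm_num, by rw [hU]; norm_num, ?_, ?_⟩
    · rw [hU]; simpa using natDegree_C_mul_le (2:ℝ) X
    · rw [hU]; simp
  | more n ih1 ih2 =>
    obtain ⟨e1, e2, d1, c1⟩ := ih2
    obtain ⟨f1, f2, d2, c2⟩ := ih1
    have hrec : U ℝ ((n + 2 : ℕ) : ℤ) = C 2 * X * U ℝ ((n+1 : ℕ) : ℤ) - U ℝ (n : ℤ) := by
      push_cast
      rw [U_add_two ℝ (n : ℤ), (map_ofNat Polynomial.C 2 : C (2:ℝ) = 2)]
    refine ⟨?_, ?_, ?_, ?_⟩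
    · rw [hrec]; simp only [eval_sub, eval_mul, eval_C, eval_X, e1, f1]; push_cast; ring
    · rw [hrec]; simp only [eval_sub, eval_mul, eval_C, eval_X, e2, f2]; push_cast; ring
    · rw [hrec]
      refine le_trans (natDegree_sub_le _ _) (max_le ?_ (d2.trans (by omega)))
      refine le_trans (natDegree_mul_le) ?_
      have : (C (2:ℝ) * X).natDegree ≤ 1 := by
        simpa using natDegree_C_mul_le (2:ℝ) X
      omega
    · rw [hrec, coeff_sub, mul_assoc, coeff_C_mul, coeff_X_mul]
      rw [c1, coeff_eq_zero_of_natDegree_lt (lt_of_le_of_lt d2 (by omega))]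
      ring

lemma chebU_deriv2 (n : ℤ) :
    (1 - X ^ 2 : ℝ[X]) * derivative (derivative (U ℝ n)) =
      (1 - ((n : ℝ[X]) + 1) ^ 2) * U ℝ n + 3 * X * derivative (U ℝ n) := by
  have h := congr_arg derivative (add_one_mul_T_eq_poly_in_U (R := ℝ) n)
  have h2 : derivative (T ℝ (n + 1)) = ((n : ℝ[X]) + 1) * U ℝ n := by
    have := T_derivative_eq_U (R := ℝ) (n + 1)
    simpa using this
  simp only [derivative_mul, derivative_sub, derivative_add, derivative_one, derivative_X,
    derivative_pow, derivative_intCast, (map_ofNat Polynomial.C 2 : C (2:ℝ) = 2), C_eq_natCast,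
    Nat.cast_ofNat, h2] at h
  push_cast at h ⊢
  linear_combination h

lemma cheb_key (N M : ℕ) (hN : 2 ≤ N) (hM : M = N - 1) (x : Fin N → ℝ)
    (hinj : Function.Injective x)
    (hroot : ∀ j, (x j ^ 2 - 1) * (U ℝ ((M : ℤ) - 1)).eval (x j) = 0) :
    (X ^ 2 - 1) * U ℝ ((M : ℤ) - 1) = C ((2:ℝ) ^ (M - 1)) * ∏ k : Fin N, (X - C (x k)) := by
  have hM1 : 1 ≤ M := by omega
  have hNM : N = (M - 1) + 2 := by omega
  have hcast : ((M - 1 : ℕ) : ℤ) = (M : ℤ) - 1 := by omega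
  obtain ⟨-, -, hud, huc⟩ := chebU_basic (M - 1)
  rw [hcast] at hud huc
  set u : ℝ[X] := U ℝ ((M : ℤ) - 1) with hu
  set ω : ℝ[X] := ∏ k : Fin N, (X - C (x k)) with hω
  have hmon : ∀ i ∈ (univ : Finset (Fin N)), Monic (X - C (x i)) := fun i _ => monic_X_sub_C _
  have hωm : ω.Monic := monic_prod_of_monic _ _ hmon
  have hωd : ω.natDegree = N := by
    rw [hω, natDegree_prod_of_monic _ _ hmon]
    simp [natDegree_X_sub_C]
  set q : ℝ[X] := (X ^ 2 - 1) * u - C ((2:ℝ) ^ (M - 1)) * ω with hq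
  have hqe : ∀ j : Fin N, q.eval (x j) = 0 := by
    intro j
    have : ω.eval (x j) = 0 := by
      rw [hω, eval_prod]
      exact Finset.prod_eq_zero (mem_univ j) (by simp)
    simp [hq, this, hroot j]
  have hL : ((X ^ 2 - 1) * u).coeff N = 2 ^ (M - 1) := by
    have h1 : (X ^ 2 - 1) * u = u * X ^ 2 - u := by ring
    have h2 : u.coeff (M - 1 + 2) = 0 :=
      coeff_eq_zero_of_natDegree_lt (by omega)
    rw [h1, coeff_sub, hNM, coeff_mul_X_pow, h2, huc, sub_zero]
  have hR : (C ((2:ℝ) ^ (M - 1)) * ω).coeff N = 2 ^ (M - 1) := by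
    rw [coeff_C_mul, ← hωd, hωm.coeff_natDegree, mul_one]
  have hLd : ((X ^ 2 - 1) * u).natDegree ≤ N := by
    refine le_trans natDegree_mul_le ?_
    have : (X ^ 2 - 1 : ℝ[X]).natDegree ≤ 2 := by
      refine le_trans (natDegree_sub_le _ _) ?_
      simp [natDegree_X_pow]
    omega
  have hRd : (C ((2:ℝ) ^ (M - 1)) * ω).natDegree ≤ N :=
    le_trans (natDegree_C_mul_le _ _) hωd.le
  have hq0 : q = 0 := by
    by_contra hne
    have hdle : q.natDegree ≤ N := le_trans (natDegree_sub_le _ _) (max_le hLd hRd)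
    have hcN : q.coeff N = 0 := by rw [hq, coeff_sub, hL, hR, sub_self]
    have hdne : q.natDegree ≠ N := by
      intro h
      exact leadingCoeff_ne_zero.mpr hne (by rw [leadingCoeff, h, hcN])
    have : q.natDegree < Fintype.card (Fin N) := by
      rw [Fintype.card_fin]; omega
    exact hne (Polynomial.eq_zero_of_natDegree_lt_card_of_eval_eq_zero q hinj hqe this)
  exact sub_eq_zero.mp hq0

end ChebyshevDiffAux

/-- the Chebyshev spectral differentiation matrix `D̃` on the
Chebyshev–Gauss–Lobatto nodes `x_j = cos(πj/M)`, `M = N-1`, differentiates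
polynomials of degree at most `N-1` exactly on the grid:
`∑_j D̃[i,j] p(x_j) = p'(x_i)`. -/
theorem chebyshev_differentiation_matrix_exact
    (N : ℕ) (hN : 2 ≤ N) (M : ℕ) (hM : M = N - 1)
    (x : Fin N → ℝ) (hx : ∀ j : Fin N, x j = Real.cos (π * j / M))
    (c : Fin N → ℝ)
    (hc : ∀ j : Fin N, c j = if (j : ℕ) = 0 ∨ (j : ℕ) = M then 2 else 1)
    (D : Matrix (Fin N) (Fin N) ℝ)
    (hD : ∀ i j : Fin N,
      D i j =
        if i = j then
          (if (i : ℕ) = 0 then (2 * (M : ℝ) ^ 2 + 1) / 6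
           else if (i : ℕ) = M then -((2 * (M : ℝ) ^ 2 + 1) / 6)
           else -(x j) / (2 * (1 - x j ^ 2)))
        else (c i / c j) * (-1 : ℝ) ^ ((i : ℕ) + (j : ℕ)) / (x i - x j)) :
    ∀ p : Polynomial ℝ, p.natDegree ≤ N - 1 →
      ∀ i : Fin N, ∑ j, D i j * p.eval (x j) = (Polynomial.derivative p).eval (x i) := by
  open Polynomial.Chebyshev ChebyshevDiffAux in
  intro p hp i
  have hM1 : 1 ≤ M := by omega
  have hMR : (M : ℝ) ≠ 0 := Nat.cast_ne_zero.mpr (by omega)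
  have hjle : ∀ j : Fin N, (j : ℕ) ≤ M := fun j => by have := j.isLt; omega
  -- node endpoints
  have hx1 : ∀ j : Fin N, (j : ℕ) = 0 → x j = 1 := by
    intro j h; rw [hx j, h]; norm_num
  have hx2 : ∀ j : Fin N, (j : ℕ) = M → x j = -1 := by
    intro j h; rw [hx j, h]
    rw [mul_div_assoc, div_self hMR, mul_one, Real.cos_pi]
  -- injectivity
  have hmem : ∀ j : Fin N, π * j / M ∈ Set.Icc (0:ℝ) π := by
    intro j
    constructor
    · positivity
    · rw [div_le_iff₀ (by exact_mod_cast Nat.pos_of_ne_zero (by omega))]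
      have : (j : ℝ) ≤ M := by exact_mod_cast hjle j
      nlinarith [Real.pi_pos]
  have hinj : Function.Injective x := by
    intro a b hab
    rw [hx a, hx b] at hab
    have := Real.injOn_cos (hmem a) (hmem b) hab
    have h2 : (a : ℝ) = b := by
      field_simp at this
      linarith
    exact Fin.ext (by exact_mod_cast h2)
  -- the Chebyshev U polynomial
  set u : ℝ[X] := U ℝ ((M : ℤ) - 1) with hu_def
  have hcast : ((M - 1 : ℕ) : ℤ) = (M : ℤ) - 1 := by omega
  obtain ⟨hu1', hu2', -, -⟩ := chebU_basic (M - 1)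
  rw [hcast] at hu1' hu2'
  have hu1 : u.eval 1 = M := by
    rw [← hu_def] at hu1'; rw [hu1']; push_cast [hM1]; ring
  have hu2 : u.eval (-1) = (-1) ^ (M - 1) * M := by
    rw [← hu_def] at hu2'; rw [hu2']; push_cast [hM1]; ring
  -- interior node facts
  have hIsin : ∀ j : Fin N, 0 < (j : ℕ) → (j : ℕ) < M → 0 < Real.sin (π * j / M) := by
    intro j h0 h1
    apply Real.sin_pos_of_pos_of_lt_pi
    · have : (0:ℝ) < (j:ℕ) := by exact_mod_cast h0
      positivity
    · rw [div_lt_iff₀ (by exact_mod_cast Nat.pos_of_ne_zero (by omega))]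
      have : ((j:ℕ) : ℝ) < M := by exact_mod_cast h1
      nlinarith [Real.pi_pos]
  have hIs : ∀ j : Fin N, 0 < (j : ℕ) → (j : ℕ) < M → 0 < 1 - x j ^ 2 := by
    intro j h0 h1
    have hs := hIsin j h0 h1
    have : 1 - x j ^ 2 = Real.sin (π * j / M) ^ 2 := by
      rw [hx j, Real.sin_sq]
    rw [this]; positivity
  have hMθ : ∀ j : Fin N, (M : ℝ) * (π * j / M) = (j : ℕ) * π := by
    intro j; field_simp
  have hIu : ∀ j : Fin N, 0 < (j : ℕ) → (j : ℕ) < M → u.eval (x j) = 0 := by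
    intro j h0 h1
    have hs := hIsin j h0 h1
    have h := U_real_cos (π * j / M) ((M : ℤ) - 1)
    rw [← hu_def, ← hx j] at h
    push_cast at h
    have h2 : ((M:ℝ) - 1 + 1) * (π * ↑(j:ℕ) / ↑M) = (j : ℕ) * π := by field_simp; ring
    rw [h2, Real.sin_nat_mul_pi] at h
    exact (mul_eq_zero.mp h).resolve_right (ne_of_gt hs)
  have hIT : ∀ j : Fin N, (T ℝ (M : ℤ)).eval (x j) = (-1) ^ (j : ℕ) := by
    intro j
    have h := T_real_cos (π * j / M) (M : ℤ)
    rw [← hx j] at h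
    have h2 : (((M:ℤ) : ℝ)) * (π * j / M) = (j : ℕ) * π - 0 := by push_cast; field_simp; ring
    rw [h2, Real.cos_nat_mul_pi_sub] at h
    rw [h]; simp
  -- evaluated derivative identities
  have evA : ∀ t : ℝ, (M : ℝ) * (T ℝ (M : ℤ)).eval t
      = t * u.eval t - (1 - t ^ 2) * (derivative u).eval t := by
    intro t
    have h := congr_arg (eval t) (add_one_mul_T_eq_poly_in_U (R := ℝ) ((M : ℤ) - 1))
    rw [sub_add_cancel] at h
    simp only [eval_mul, eval_add, eval_sub, eval_one, eval_X, eval_pow, eval_intCast] at h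
    rw [← hu_def] at h
    push_cast at h
    linear_combination h
  have evB : ∀ t : ℝ, (1 - t ^ 2) * (derivative (derivative u)).eval t
      = (1 - (M : ℝ) ^ 2) * u.eval t + 3 * t * (derivative u).eval t := by
    intro t
    have h := congr_arg (eval t) (chebU_deriv2 ((M : ℤ) - 1))
    simp only [eval_mul, eval_add, eval_sub, eval_one, eval_X, eval_pow, eval_intCast,
      eval_ofNat] at h
    rw [← hu_def] at h
    push_cast at h
    linear_combination h
  -- endpoint derivative values
  have hdu1 : 3 * (derivative u).eval 1 = (M : ℝ) ^ 3 - M := by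
    have h := evB 1
    rw [hu1] at h
    norm_num at h
    linear_combination -h
  have hdu2 : 3 * (derivative u).eval (-1) = (1 - (M : ℝ) ^ 2) * ((-1) ^ (M - 1) * M) := by
    have h := evB (-1)
    rw [hu2] at h
    norm_num at h
    linear_combination h
  -- interior derivative values
  have hduj : ∀ j : Fin N, 0 < (j : ℕ) → (j : ℕ) < M →
      (1 - x j ^ 2) * (derivative u).eval (x j) = -(M : ℝ) * (-1) ^ (j : ℕ) := by
    intro j h0 h1
    have h := evA (x j)
    rw [hIu j h0 h1, hIT j] at h
    linear_combination h
  have hddj : ∀ j : Fin N, 0 < (j : ℕ) → (j : ℕ) < M →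
      (1 - x j ^ 2) * (derivative (derivative u)).eval (x j)
        = 3 * x j * (derivative u).eval (x j) := by
    intro j h0 h1
    have h := evB (x j)
    rw [hIu j h0 h1] at h
    linear_combination h
  -- the nodal polynomial
  set ω : ℝ[X] := ∏ k : Fin N, (X - C (x k)) with hω_def
  have hroot : ∀ j : Fin N, (x j ^ 2 - 1) * u.eval (x j) = 0 := by
    intro j
    rcases eq_or_ne ((j:ℕ)) 0 with h0 | h0
    · rw [hx1 j h0]; ring
    · rcases eq_or_ne ((j:ℕ)) M with h1 | h1
      · rw [hx2 j h1]; ring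
      · rw [hIu j (by omega) (by omega)]; ring
  have key : (X ^ 2 - 1) * u = C ((2:ℝ) ^ (M - 1)) * ω :=
    cheb_key N M hN hM x hinj hroot
  -- first and second derivative of the key identity, evaluated
  have keyd := congr_arg derivative key
  rw [derivative_mul, derivative_mul, derivative_C, derivative_sub, derivative_one,
    derivative_X_pow] at keyd
  have keydd := congr_arg derivative keyd
  simp only [derivative_add, derivative_mul, derivative_sub, derivative_zero, derivative_one,
    derivative_C, derivative_X_pow, derivative_natCast, derivative_X] at keydd
  have kd1 : ∀ t : ℝ, (2:ℝ) ^ (M - 1) * (derivative ω).eval t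
      = 2 * t * u.eval t + (t ^ 2 - 1) * (derivative u).eval t := by
    intro t
    have h := congr_arg (eval t) keyd
    simp only [eval_add, eval_mul, eval_sub, eval_zero, eval_one, eval_C, eval_X, eval_pow,
      eval_natCast, eval_ofNat] at h
    push_cast at h
    linear_combination -h
  have kd2 : ∀ t : ℝ, (2:ℝ) ^ (M - 1) * (derivative (derivative ω)).eval t
      = 2 * u.eval t + 4 * t * (derivative u).eval t
        + (t ^ 2 - 1) * (derivative (derivative u)).eval t := by
    intro t
    have h := congr_arg (eval t) keydd
    simp only [eval_add, eval_mul, eval_sub, eval_zero, eval_one, eval_C, eval_X, eval_pow,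
      eval_natCast, eval_ofNat] at h
    push_cast at h
    linear_combination -h
  -- the reduced nodal polynomials
  set g : Fin N → ℝ[X] := fun j => ∏ k ∈ univ.erase j, (X - C (x k)) with hg_def
  have hωg : ∀ j : Fin N, ω = (X - C (x j)) * g j := fun j =>
    (Finset.mul_prod_erase univ _ (mem_univ j)).symm
  have hg0 : ∀ i j : Fin N, i ≠ j → (g j).eval (x i) = 0 := by
    intro i j hij
    rw [hg_def]
    simp only [eval_prod]
    exact Finset.prod_eq_zero (Finset.mem_erase.mpr ⟨hij, mem_univ i⟩) (by simp)
  have hωg' : ∀ j : Fin N, derivative ω = g j + (X - C (x j)) * derivative (g j) := by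
    intro j
    rw [hωg j, derivative_mul, derivative_sub, derivative_X, derivative_C, sub_zero, one_mul]
  have hgP : ∀ j : Fin N, (g j).eval (x j) = (derivative ω).eval (x j) := by
    intro j
    rw [hωg' j]
    simp
  have hgd_off : ∀ j : Fin N, i ≠ j →
      (x i - x j) * (derivative (g j)).eval (x i) = (g i).eval (x i) := by
    intro j hij
    have h := congr_arg (eval (x i)) (hωg' j)
    rw [hgP i]
    simp only [eval_add, eval_mul, eval_sub, eval_X, eval_C] at h
    rw [hg0 i j hij] at h
    linarith [h]
  have hgd_diag : ∀ j : Fin N,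
      2 * (derivative (g j)).eval (x j) = (derivative (derivative ω)).eval (x j) := by
    intro j
    have h := congr_arg (eval (x j)) (congr_arg derivative (hωg' j))
    rw [derivative_add, derivative_mul, derivative_sub, derivative_X, derivative_C] at h
    simp only [eval_add, eval_mul, eval_sub, eval_X, eval_C, eval_zero, eval_one, sub_zero,
      one_mul, sub_self, zero_mul, add_zero] at h
    linarith [h]
  -- values of the nodal products
  have hk0 : ((2:ℝ) ^ (M - 1)) ≠ 0 := by positivity
  have hsM : ((-1:ℝ)) ^ M = -((-1:ℝ)) ^ (M - 1) := by
    have h : ((-1:ℝ)) ^ (M - 1 + 1) = -((-1:ℝ)) ^ (M - 1) := by rw [pow_succ]; ring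
    rwa [show M - 1 + 1 = M from by omega] at h
  obtain ⟨s, hs⟩ : ∃ y : ℝ, ((-1:ℝ)) ^ (M - 1) = y := ⟨_, rfl⟩
  rw [hs] at hu2 hdu2 hsM
  have hc_ne : ∀ j : Fin N, c j ≠ 0 := by
    intro j; rw [hc j]; split <;> norm_num
  have hPval : ∀ j : Fin N, (2:ℝ) ^ (M - 1) * (g j).eval (x j)
      = (-1) ^ (j:ℕ) * c j * M := by
    intro j
    rw [hgP j]
    rcases eq_or_ne ((j:ℕ)) 0 with h0 | h0
    · rw [hx1 j h0, kd1 1, hu1, hc j, if_pos (Or.inl h0), h0]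
      norm_num
    · rcases eq_or_ne ((j:ℕ)) M with h1 | h1
      · rw [hx2 j h1, kd1 (-1), hu2, hc j, if_pos (Or.inr h1), h1, hsM]
        ring
      · have hI := hduj j (by omega) (by omega)
        rw [kd1 (x j), hIu j (by omega) (by omega), hc j, if_neg (by tauto)]
        linear_combination -hI
  have hPne : ∀ j : Fin N, (g j).eval (x j) ≠ 0 := by
    intro j hzero
    have h := hPval j
    rw [hzero, mul_zero] at h
    have hσ : ((-1:ℝ)) ^ (j:ℕ) ≠ 0 := pow_ne_zero _ (by norm_num)
    exact (mul_ne_zero (mul_ne_zero hσ (hc_ne j)) hMR) h.symm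
  -- entrywise identification
  have claim1 : ∀ j : Fin N, D i j
      = ((g j).eval (x j))⁻¹ * (derivative (g j)).eval (x i) := by
    intro j
    rcases eq_or_ne i j with rfl | hij
    · -- diagonal entries
      have hB := hgd_diag i
      rw [hD i i, if_pos rfl, eq_comm, inv_mul_eq_div]
      rcases eq_or_ne ((i:ℕ)) 0 with h0 | h0
      · have hx0 := hx1 i h0
        have hAne := hPne i
        have hA := hPval i
        have hW := kd2 (x i)
        rw [hx0] at hB hAne hA hW ⊢
        rw [hu1] at hW
        rw [hc i, if_pos (Or.inl h0), h0] at hA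
        rw [if_pos h0, div_eq_iff hAne]
        apply mul_left_cancel₀ hk0
        linear_combination ((2:ℝ)^(M-1)/2) * hB + (1/2) * hW + (2/3) * hdu1
          - ((2*(M:ℝ)^2+1)/6) * hA
      · rcases eq_or_ne ((i:ℕ)) M with h1 | h1
        · have hx0 := hx2 i h1
          have hAne := hPne i
          have hA := hPval i
          have hW := kd2 (x i)
          rw [hx0] at hB hAne hA hW ⊢
          rw [hu2] at hW
          rw [hc i, if_pos (Or.inr h1), h1, hsM] at hA
          rw [if_neg h0, if_pos h1, div_eq_iff hAne]
          apply mul_left_cancel₀ hk0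
          linear_combination ((2:ℝ)^(M-1)/2) * hB + (1/2) * hW - (2/3) * hdu2
            + ((2*(M:ℝ)^2+1)/6) * hA
        · have h0' : 0 < (i:ℕ) := by omega
          have h1' : (i:ℕ) < M := by omega
          have hAne := hPne i
          have hW := kd2 (x i)
          rw [hIu i h0' h1'] at hW
          have hA := kd1 (x i)
          rw [← hgP i, hIu i h0' h1'] at hA
          have hdd := hddj i h0' h1'
          have h1t : (0:ℝ) < 2 * (1 - x i ^ 2) := by
            have := hIs i h0' h1'
            linarith
          rw [if_neg h0, if_neg h1, div_eq_div_iff hAne (ne_of_gt h1t)]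
          apply mul_left_cancel₀ hk0
          linear_combination (x i) * hA + (1 - x i ^ 2) * ((2:ℝ)^(M-1)) * hB
            + (1 - x i ^ 2) * hW - (1 - x i ^ 2) * hdd
    · -- off-diagonal entries
      have hAne := hPne j
      have hxij : x i - x j ≠ 0 := sub_ne_zero.mpr (fun h => hij (hinj h))
      have hB := hgd_off j hij
      have hAj := hPval j
      have hAi := hPval i
      rw [hD i j, if_neg hij, eq_comm, inv_mul_eq_div, div_eq_div_iff hAne hxij,
        div_mul_eq_mul_div, div_mul_eq_mul_div, eq_div_iff (hc_ne j)]
      rcases Nat.even_or_odd ((i:ℕ)) with hpi | hpi <;>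
          rcases Nat.even_or_odd ((j:ℕ)) with hpj | hpj <;>
          rw [hpi.neg_one_pow] at hAi <;> rw [hpj.neg_one_pow] at hAj <;>
          rw [pow_add, hpi.neg_one_pow, hpj.neg_one_pow] <;>
          apply mul_left_cancel₀ hk0
      · linear_combination c j * ((2:ℝ)^(M-1)) * hB + c j * hAi - c i * hAj
      · linear_combination c j * ((2:ℝ)^(M-1)) * hB + c j * hAi + c i * hAj
      · linear_combination c j * ((2:ℝ)^(M-1)) * hB + c j * hAi + c i * hAj
      · linear_combination c j * ((2:ℝ)^(M-1)) * hB + c j * hAi - c i * hAj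
  -- Lagrange basis
  set ℓ : Fin N → ℝ[X] := fun j => C (((g j).eval (x j))⁻¹) * g j with hℓ_def
  have hℓeval : ∀ i' j : Fin N, (ℓ j).eval (x i') = if i' = j then 1 else 0 := by
    intro i' j
    rw [hℓ_def]
    simp only [eval_mul, eval_C]
    rcases eq_or_ne i' j with rfl | hij
    · rw [if_pos rfl, inv_mul_cancel₀ (hPne _)]
    · rw [if_neg hij, hg0 i' j hij, mul_zero]
  have hgdeg : ∀ j : Fin N, (g j).natDegree ≤ N - 1 := by
    intro j
    rw [hg_def]
    refine le_trans (natDegree_prod_le _ _) ?_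
    have h1 : ∑ k ∈ univ.erase j, (X - C (x k)).natDegree = ∑ k ∈ univ.erase j, 1 :=
      Finset.sum_congr rfl (fun k _ => natDegree_X_sub_C (x k))
    rw [h1, Finset.sum_const, smul_eq_mul, mul_one,
      Finset.card_erase_of_mem (mem_univ j), Finset.card_univ, Fintype.card_fin]
  have claim2 : p = ∑ j, C (p.eval (x j)) * ℓ j := by
    have hqe : ∀ i' : Fin N, (p - ∑ j, C (p.eval (x j)) * ℓ j).eval (x i') = 0 := by
      intro i'
      simp only [eval_sub, eval_finset_sum, eval_mul, eval_C]
      rw [Finset.sum_eq_single i']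
      · rw [hℓeval i' i', if_pos rfl, mul_one, sub_self]
      · intro b _ hb
        rw [hℓeval i' b, if_neg (Ne.symm hb), mul_zero]
      · intro h; exact absurd (mem_univ i') h
    have hsd : (∑ j, C (p.eval (x j)) * ℓ j).natDegree ≤ N - 1 := by
      refine natDegree_sum_le_of_forall_le _ _ ?_
      intro j _
      rw [hℓ_def]
      exact le_trans (natDegree_C_mul_le _ _)
        (le_trans (natDegree_C_mul_le _ _) (hgdeg j))
    have hqd : (p - ∑ j, C (p.eval (x j)) * ℓ j).natDegree < Fintype.card (Fin N) := by
      rw [Fintype.card_fin]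
      have := natDegree_sub_le p (∑ j, C (p.eval (x j)) * ℓ j)
      omega
    have h0 := Polynomial.eq_zero_of_natDegree_lt_card_of_eval_eq_zero _ hinj hqe hqd
    exact sub_eq_zero.mp h0
  -- final assembly
  have hfin : (derivative p).eval (x i)
      = ∑ j, p.eval (x j) * (((g j).eval (x j))⁻¹ * (derivative (g j)).eval (x i)) := by
    conv_lhs => rw [claim2]
    rw [derivative_sum]
    simp only [hℓ_def, derivative_C_mul]
    simp only [eval_finset_sum, eval_mul, eval_C]
  rw [hfin]
  refine Finset.sum_congr rfl ?_
  intro j _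
  rw [claim1 j]
  ring
end
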